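/- Let A be a C*-algebra represented faithfully and nondegenerately on B(H), (e_i)_{i∈I} an approximate unit, and U a cofinal ultrafilter over I. The map φ : A^{sU} → B(H) sending a U-strict convergent family to its U-strict limit is a surjective *-homomorphism onto M := {m ∈ B(H) : am ∈ A and ma ∈ A for all a ∈ A}, with kernel J. Consequently A^{sU}/J ≅ M, and in particular M(A) is unital, with unit the image of (e_i)_{i∈I}. -/
import Mathlib


open Filter

/-- `U`-strict convergence of a family of operators to `T` relative to `A ⊆ B(H)`. -/
def UStrictTo {I : Type*} {H : Type*} [NormedAddCommGroup H] [InnerProductSpace ℂ H]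
    [CompleteSpace H]
    (U : Ultrafilter I) (A : Set (H →L[ℂ] H)) (a : I → H →L[ℂ] H) (T : H →L[ℂ] H) : Prop :=
  ∀ x ∈ A, ∀ ε > (0 : ℝ), {i | ‖a i * x - T * x‖ < ε ∧ ‖x * a i - x * T‖ < ε} ∈ U

/-- A nondegenerate action: the span of `{a ξ : a ∈ A, ξ ∈ H}` is dense in `H`. -/
def Nondegenerate {H : Type*} [NormedAddCommGroup H] [InnerProductSpace ℂ H]
    (A : Set (H →L[ℂ] H)) : Prop :=
  Dense (↑(Submodule.span ℂ {ξ : H | ∃ a ∈ A, ∃ η : H, a η = ξ}) : Set H)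

/-- `A^{sU}/J` is isomorphic to the idealizer
`M = {m ∈ B(H) : a m ∈ A and m a ∈ A for all a ∈ A}` via the `U`-strict limit map:
every `U`-strict limit of a bounded family in `A` lies in `M`; conversely for every
`m ∈ M` the family `(m e i)` has entries in `A`, is bounded and is `U`-strict
convergent to `m`; and the approximate unit `(e i)` is `U`-strict convergent to `1`,
so that `M(A)` is unital with unit the image of `(e i)`. -/
theorem stmt_11 {I : Type*} [SemilatticeSup I] [Nonempty I]
    {H : Type*} [NormedAddCommGroup H] [InnerProductSpace ℂ H] [CompleteSpace H]
    (U : Ultrafilter I) (hU : ∀ i₀ : I, {i | i₀ ≤ i} ∈ U)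
    (A : NonUnitalStarSubalgebra ℂ (H →L[ℂ] H)) (hA : IsClosed (A : Set (H →L[ℂ] H)))
    (hnd : Nondegenerate (A : Set (H →L[ℂ] H)))
    (e : I → H →L[ℂ] H) (he : ∀ i, e i ∈ A)
    (hpos : ∀ i, (e i).IsPositive)
    (M : ℝ) (hM : ∀ i, ‖e i‖ ≤ M)
    (happrox : ∀ x ∈ A, Tendsto (fun i => ‖x * e i - x‖) atTop (nhds 0)
        ∧ Tendsto (fun i => ‖e i * x - x‖) atTop (nhds 0)) :
    -- the U-strict limit of any member of A^{sU} lies in the idealizer M: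
    (∀ (a : I → H →L[ℂ] H), (∀ i, a i ∈ A) → (∃ Ma : ℝ, ∀ i, ‖a i‖ ≤ Ma) →
      ∀ T : H →L[ℂ] H, UStrictTo U (A : Set (H →L[ℂ] H)) a T →
        ∀ x ∈ A, x * T ∈ A ∧ T * x ∈ A)
    -- surjectivity: every m in the idealizer M is a U-strict limit, namely of (m e i):
    ∧ (∀ m : H →L[ℂ] H, (∀ x ∈ A, x * m ∈ A ∧ m * x ∈ A) →
        (∀ i, m * e i ∈ A) ∧ (∃ Mm : ℝ, ∀ i, ‖m * e i‖ ≤ Mm)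
        ∧ UStrictTo U (A : Set (H →L[ℂ] H)) (fun i => m * e i) m)
    -- the image of (e i) is the unit: (e i) is U-strict convergent to 1:
    ∧ UStrictTo U (A : Set (H →L[ℂ] H)) e 1 := by

  have atTop_le : ∀ S : Set I, (∀ᶠ i in atTop, i ∈ S) → S ∈ U := by
    intro S hS
    obtain ⟨i₀, h⟩ := eventually_atTop.mp hS
    exact U.toFilter.mem_of_superset (hU i₀) h
  refine ⟨?_, ?_, ?_⟩
  · intro a ha _ T hT x hx
    constructor
    · show x * T ∈ (A : Set (H →L[ℂ] H))
      rw [← hA.closure_eq, Metric.mem_closure_iff]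
      intro ε hε
      obtain ⟨i, hi⟩ := U.toFilter.nonempty_of_mem (hT x hx ε hε)
      exact ⟨x * a i, A.mul_mem hx (ha i), by
        rw [dist_eq_norm]; simpa [norm_sub_rev] using hi.2⟩
    · show T * x ∈ (A : Set (H →L[ℂ] H))
      rw [← hA.closure_eq, Metric.mem_closure_iff]
      intro ε hε
      obtain ⟨i, hi⟩ := U.toFilter.nonempty_of_mem (hT x hx ε hε)
      exact ⟨a i * x, A.mul_mem (ha i) hx, by
        rw [dist_eq_norm]; simpa [norm_sub_rev] using hi.1⟩
  · intro m hm
    refine ⟨fun i => (hm (e i) (he i)).2, ⟨‖m‖ * M, fun i => ?_⟩, ?_⟩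
    · calc ‖m * e i‖ ≤ ‖m‖ * ‖e i‖ := norm_mul_le _ _
        _ ≤ ‖m‖ * M := by
            have := hM i
            nlinarith [norm_nonneg m, norm_nonneg (e i)]
    · intro x hx ε hε
      apply atTop_le
      have h1 : Tendsto (fun i => ‖m * e i * x - m * x‖) atTop (nhds 0) := by
        have hb : ∀ i, ‖m * e i * x - m * x‖ ≤ ‖m‖ * ‖e i * x - x‖ := by
          intro i
          have : m * e i * x - m * x = m * (e i * x - x) := by
            rw [mul_sub, mul_assoc]
          rw [this]
          exact norm_mul_le _ _
        have hmul : Tendsto (fun i => ‖m‖ * ‖e i * x - x‖) atTop (nhds 0) := by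
          simpa using (happrox x hx).2.const_mul ‖m‖
        exact squeeze_zero (fun i => norm_nonneg _) hb hmul
      have h2 : Tendsto (fun i => ‖x * (m * e i) - x * m‖) atTop (nhds 0) := by
        have := (happrox (x * m) (hm x hx).1).1
        simpa [mul_assoc] using this
      filter_upwards [h1.eventually_lt_const hε, h2.eventually_lt_const hε] with i hi1 hi2
      exact ⟨hi1, hi2⟩
  · intro x hx ε hε
    apply atTop_le
    have h1 := (happrox x hx).2.eventually_lt_const hε
    have h2 := (happrox x hx).1.eventually_lt_const hε
    filter_upwards [h1, h2] with i hi1 hi2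
    constructor
    · simpa [one_mul] using hi1
    · simpa [mul_one] using hi2
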